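/- Let a, b, c be integers with 1 < a < b < c, 1 + c = a + b, and a ∤ b. Then for each n there is an injection from the set of partitions of n all of whose parts equal a or b into the set of partitions of n all of whose parts equal 1 or c. -/
import Mathlib

lemma multiset_two_vals (s : Multiset ℕ) (a b : ℕ) (hab : a ≠ b)
    (h : ∀ i ∈ s, i = a ∨ i = b) :
    s = Multiset.replicate (s.count a) a + Multiset.replicate (s.count b) b := by
  ext j
  rw [Multiset.count_add, Multiset.count_replicate, Multiset.count_replicate]
  by_cases hja : j = a
  · subst hja
    rw [if_pos rfl, if_neg (fun h' => hab h'.symm)]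
    omega
  · by_cases hjb : j = b
    · subst hjb
      rw [if_pos rfl, if_neg hab]
      omega
    · have hjs : j ∉ s := fun hj => by rcases h j hj with h' | h' <;> tauto
      rw [if_neg (fun h' => hja h'.symm), if_neg (fun h' => hjb h'.symm),
        Multiset.count_eq_zero_of_notMem hjs]

theorem stmt_4 (a b c : ℕ) (ha : 1 < a) (hab : a < b) (hbc : b < c)
    (hsum : 1 + c = a + b) (hdvd : ¬ a ∣ b) (n : ℕ) :
    ∃ f : {p : n.Partition // ∀ i ∈ p.parts, i = a ∨ i = b} →
        {p : n.Partition // ∀ i ∈ p.parts, i = 1 ∨ i = c},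
      Function.Injective f := by
  classical
  set d := Nat.gcd a b with hd
  set a' := a / d with ha'
  have hd_pos : 0 < d := Nat.gcd_pos_of_pos_left _ (by omega)
  have hdda : d ∣ a := Nat.gcd_dvd_left a b
  have hddb : d ∣ b := Nat.gcd_dvd_right a b
  have hada : d * a' = a := Nat.mul_div_cancel' hdda
  have ha'2 : 2 ≤ a' := by
    rcases Nat.lt_or_ge a' 2 with h | h
    · interval_cases a'
      · omega
      · have : a = d := by omega
        exact absurd (this ▸ hddb) hdvd
    · exact h
  have hcop : Nat.Coprime a' (b / d) := Nat.coprime_div_gcd_div_gcd hd_pos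
  -- sum identity
  have hcount : ∀ p : {p : n.Partition // ∀ i ∈ p.parts, i = a ∨ i = b},
      a * p.1.parts.count a + b * p.1.parts.count b = n := by
    intro p
    have hrep := multiset_two_vals p.1.parts a b (by omega) p.2
    have hs := p.1.parts_sum
    rw [hrep] at hs
    simpa [Multiset.sum_replicate, smul_eq_mul, mul_comm] using hs
  -- bound for the image
  have hcq : ∀ p : {p : n.Partition // ∀ i ∈ p.parts, i = a ∨ i = b},
      c * (p.1.parts.count b / a') ≤ n := by
    intro p
    have h1 := hcount p
    set ℓ := p.1.parts.count b
    have h2 : ℓ / a' * a' ≤ ℓ := Nat.div_mul_le_self ℓ a'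
    have h3 : c ≤ a' * b := by nlinarith
    calc c * (ℓ / a') ≤ (a' * b) * (ℓ / a') := Nat.mul_le_mul_right _ h3
      _ = b * (ℓ / a' * a') := by ring
      _ ≤ b * ℓ := Nat.mul_le_mul_left _ h2
      _ ≤ n := by omega
  -- the map
  refine ⟨fun p => ⟨⟨Multiset.replicate (p.1.parts.count b / a') c +
      Multiset.replicate (n - c * (p.1.parts.count b / a')) 1, ?_, ?_⟩, ?_⟩, ?_⟩
  · intro i hi
    rcases Multiset.mem_add.mp hi with h | h <;>
      rw [Multiset.eq_of_mem_replicate h] <;> omega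
  · rw [Multiset.sum_add, Multiset.sum_replicate, Multiset.sum_replicate,
      smul_eq_mul, smul_eq_mul, mul_one]
    have h1 := hcq p
    have h2 : p.1.parts.count b / a' * c = c * (p.1.parts.count b / a') :=
      Nat.mul_comm _ _
    omega
  · intro i hi
    rcases Multiset.mem_add.mp hi with h | h
    · exact Or.inr (Multiset.eq_of_mem_replicate h)
    · exact Or.inl (Multiset.eq_of_mem_replicate h)
  -- injectivity
  · intro p1 p2 hf
    have hc1 : ¬ (1 : ℕ) = c := by omega
    have hparts : (Multiset.replicate (p1.1.parts.count b / a') c +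
        Multiset.replicate (n - c * (p1.1.parts.count b / a')) 1)
        = (Multiset.replicate (p2.1.parts.count b / a') c +
        Multiset.replicate (n - c * (p2.1.parts.count b / a')) 1) := by
      have := congrArg (fun x => x.1.parts) hf
      simpa using this
    have hq : p1.1.parts.count b / a' = p2.1.parts.count b / a' := by
      have h := congrArg (Multiset.count c) hparts
      simpa [Multiset.count_replicate, hc1] using h
    set ℓ1 := p1.1.parts.count b with hℓ1
    set ℓ2 := p2.1.parts.count b with hℓ2
    set k1 := p1.1.parts.count a with hk1
    set k2 := p2.1.parts.count a with hk2
    have h1 : a * k1 + b * ℓ1 = n := hcount p1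
    have h2 : a * k2 + b * ℓ2 = n := hcount p2
    -- key step: equal quotients force equal ℓ's
    have key : ∀ x y kx ky : ℕ, a * kx + b * x = n → a * ky + b * y = n →
        y ≤ x → x / a' = y / a' → x = y := by
      intro x y kx ky hx hy hyx hqxy
      have hble : b * y ≤ b * x := Nat.mul_le_mul_left b hyx
      have hkxy : kx ≤ ky := by
        have : a * kx ≤ a * ky := by omega
        exact Nat.le_of_mul_le_mul_left this (by omega)
      obtain ⟨m, hm⟩ := Nat.le.dest hyx
      obtain ⟨kk, hkk⟩ := Nat.le.dest hkxy
      have hbm : b * m = a * kk := by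
        have hx' : a * kx + b * (y + m) = n := by rw [hm]; exact hx
        have hy' : a * (kx + kk) + b * y = n := by rw [hkk]; exact hy
        rw [Nat.mul_add] at hx'
        rw [Nat.mul_add] at hy'
        omega
      have hdvd2 : a' ∣ m := by
        have h5 : d * a' ∣ d * ((b / d) * m) := by
          rw [hada, ← mul_assoc, Nat.mul_div_cancel' hddb]
          exact ⟨kk, hbm⟩
        have h6 : a' ∣ (b / d) * m := (mul_dvd_mul_iff_left (by omega : d ≠ 0)).mp h5
        exact hcop.dvd_of_dvd_mul_left h6
      obtain ⟨t, ht⟩ := hdvd2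
      rcases Nat.eq_zero_or_pos t with ht0 | ht0
      · rw [ht0, Nat.mul_zero] at ht
        omega
      · exfalso
        have ha't : a' ≤ a' * t := Nat.le_mul_of_pos_right a' ht0
        have hdx := Nat.div_add_mod x a'
        have hdy := Nat.div_add_mod y a'
        have hmx : x % a' < a' := Nat.mod_lt x (by omega)
        have hmy : y % a' < a' := Nat.mod_lt y (by omega)
        rw [hqxy] at hdx
        omega
    have hℓ : ℓ1 = ℓ2 := by
      rcases le_total ℓ2 ℓ1 with h | h
      · exact key ℓ1 ℓ2 k1 k2 h1 h2 h hq
      · exact (key ℓ2 ℓ1 k2 k1 h2 h1 h hq.symm).symm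
    have hk : k1 = k2 := by
      have hb : b * ℓ1 = b * ℓ2 := by rw [hℓ]
      have : a * k1 = a * k2 := by omega
      exact Nat.eq_of_mul_eq_mul_left (by omega) this
    have hps : p1.1.parts = p2.1.parts := by
      rw [multiset_two_vals p1.1.parts a b (by omega) p1.2,
        multiset_two_vals p2.1.parts a b (by omega) p2.2, ← hk1, ← hk2, ← hℓ1, ← hℓ2,
        hk, hℓ]
    exact Subtype.ext (Nat.Partition.ext hps)
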